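/- An even permutation of {1,...,k} induces an even permutation on the set of subsets of {1,...,k} of any fixed cardinality h < k. -/

import Mathlib

/-- The permutation induced on `h`-element subsets of `{1,...,k}` by a permutation `π` of
`{1,...,k}`, given by `S ↦ π(S)`. -/
def inducedSubsetPerm (k h : ℕ) (π : Equiv.Perm (Fin k)) :
    Equiv.Perm {s : Finset (Fin k) // s.card = h} where
  toFun s := ⟨s.1.map π.toEmbedding, by rw [Finset.card_map]; exact s.2⟩
  invFun s := ⟨s.1.map π.symm.toEmbedding, by rw [Finset.card_map]; exact s.2⟩
  left_inv s := by
    apply Subtype.ext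
    simp [Finset.map_map]
  right_inv s := by
    apply Subtype.ext
    simp [Finset.map_map]

/-- `inducedSubsetPerm` as a monoid hom. -/
def inducedSubsetHom (k h : ℕ) :
    Equiv.Perm (Fin k) →* Equiv.Perm {s : Finset (Fin k) // s.card = h} where
  toFun := inducedSubsetPerm k h
  map_one' := by
    ext s
    simp [inducedSubsetPerm]
    exact Iff.rfl
  map_mul' π τ := by
    refine Equiv.ext fun s => Subtype.ext ?_
    show Finset.map (π * τ).toEmbedding s.1 = Finset.map π.toEmbedding (Finset.map τ.toEmbedding s.1)
    rw [Finset.map_map]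
    rfl

/-- An even permutation of `{1,...,k}` induces an even permutation on the set of subsets of
`{1,...,k}` of any fixed cardinality `h < k`. -/
theorem even_perm_induces_even_perm_on_subsets (k h : ℕ) (hh : h < k)
    (π : Equiv.Perm (Fin k)) (hπ : Equiv.Perm.sign π = 1) :
    Equiv.Perm.sign (inducedSubsetPerm k h π) = 1 := by
  have hmem : π ∈ alternatingGroup (Fin k) := Equiv.Perm.mem_alternatingGroup.mpr hπ
  rw [← Equiv.Perm.closure_three_cycles_eq_alternating] at hmem
  let g : Equiv.Perm (Fin k) →* ℤˣ :=
    Equiv.Perm.sign.comp (inducedSubsetHom k h)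
  show g π = 1
  clear hπ hh
  induction hmem using Subgroup.closure_induction with
  | mem σ hσ =>
      have h3 : σ ^ 3 = 1 := by
        have := hσ.orderOf
        rw [← this]
        exact pow_orderOf_eq_one σ
      have hg3 : (g σ) ^ 3 = 1 := by rw [← map_pow, h3, map_one]
      have hg2 : (g σ) ^ 2 = 1 := Int.units_sq (g σ)
      calc g σ = (g σ) ^ 3 * ((g σ) ^ 2)⁻¹ ^ 1 := by group
        _ = 1 := by rw [hg3, hg2]; simp
  | one => simp
  | mul a b _ _ ha hb => rw [map_mul, ha, hb, one_mul]
  | inv a _ ha => rw [map_inv, ha, inv_one]
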